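/- Suppose f : ℝ² → 𝔽² preserves every distance d > 0 with d² rational. If A, B, C, D ∈ ℝ², r ∈ ℚ, and D - C = r·(B - A), then f(D) - f(C) = r·(f(B) - f(A)). -/

import Mathlib

namespace BQaux

noncomputable section

/-- squared distance in `ℝ × ℝ` -/
def qd (x y : ℝ × ℝ) : ℝ := (x.1 - y.1) ^ 2 + (x.2 - y.2) ^ 2

/-- the quadratic form `φ` on `F × F` -/
def qF {F : Type*} [Field F] (u v : F × F) : F := (u.1 - v.1) ^ 2 + (u.2 - v.2) ^ 2

lemma qd_nonneg (x y : ℝ × ℝ) : 0 ≤ qd x y := by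
  simp only [qd]; positivity

lemma qd_self (x : ℝ × ℝ) : qd x x = 0 := by simp [qd]

lemma qd_pos {x y : ℝ × ℝ} (h : x ≠ y) : 0 < qd x y := by
  rcases (qd_nonneg x y).lt_or_eq with h' | h'
  · exact h'
  · exfalso
    apply h
    simp only [qd] at h'
    have h1 : (x.1 - y.1) ^ 2 = 0 :=
      le_antisymm (by nlinarith [sq_nonneg (x.2 - y.2)]) (sq_nonneg _)
    have h2 : (x.2 - y.2) ^ 2 = 0 :=
      le_antisymm (by nlinarith [sq_nonneg (x.1 - y.1)]) (sq_nonneg _)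
    have e1 : x.1 - y.1 = 0 := by
      exact pow_eq_zero_iff (by norm_num) |>.mp h1
    have e2 : x.2 - y.2 = 0 := by
      exact pow_eq_zero_iff (by norm_num) |>.mp h2
    exact Prod.ext_iff.mpr ⟨by linarith, by linarith⟩

lemma ne_of_qd_pos {x y : ℝ × ℝ} (h : 0 < qd x y) : x ≠ y := by
  intro he; rw [he, qd_self] at h; exact lt_irrefl _ h

lemma qF_comm {F : Type*} [Field F] (u v : F × F) : qF u v = qF v u := by
  simp only [qF]; ring

lemma qF_self {F : Type*} [Field F] (u : F × F) : qF u u = 0 := by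
  simp only [qF, sub_self]
  norm_num

/-- If `Y` is on both "circles" `qF · P1 = a`, `qF · P2 = a`, then `2Y - P1 - P2`
is a multiple of the rotated chord vector. -/
lemma solveW {F : Type*} [Field F] {P1 P2 : F × F} (hP : P1 ≠ P2) {a : F} (Y : F × F)
    (hY1 : qF Y P1 = a) (hY2 : qF Y P2 = a) :
    ∃ t : F, 2 * Y.1 - P1.1 - P2.1 = -(P2.2 - P1.2) * t ∧
             2 * Y.2 - P1.2 - P2.2 = (P2.1 - P1.1) * t := by
  have hgne : ¬ (P2.1 - P1.1 = 0 ∧ P2.2 - P1.2 = 0) := by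
    rintro ⟨u1, u2⟩
    exact hP (Prod.ext_iff.mpr ⟨(sub_eq_zero.mp u1).symm, (sub_eq_zero.mp u2).symm⟩)
  have hlin : (P2.1 - P1.1) * (2 * Y.1 - P1.1 - P2.1)
      + (P2.2 - P1.2) * (2 * Y.2 - P1.2 - P2.2) = 0 := by
    simp only [qF] at hY1 hY2
    linear_combination hY1 - hY2
  by_cases hc : P2.1 - P1.1 = 0
  · have hg2 : P2.2 - P1.2 ≠ 0 := fun h => hgne ⟨hc, h⟩
    refine ⟨-(2 * Y.1 - P1.1 - P2.1) / (P2.2 - P1.2), ?_, ?_⟩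
    · field_simp
    · rw [hc, zero_mul]
      have h0 : (P2.2 - P1.2) * (2 * Y.2 - P1.2 - P2.2) = 0 := by
        rw [hc] at hlin; linear_combination hlin
      exact (mul_eq_zero.mp h0).resolve_left hg2
  · refine ⟨(2 * Y.2 - P1.2 - P2.2) / (P2.1 - P1.1), ?_, ?_⟩
    · have h0 : 2 * Y.1 - P1.1 - P2.1
          = (-(P2.2 - P1.2) * (2 * Y.2 - P1.2 - P2.2)) / (P2.1 - P1.1) := by
        rw [eq_div_iff hc]; linear_combination hlin
      rw [h0, mul_div_assoc]
    · field_simp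

/-- The key quadratic identity: for a point on the intersection of the two circles. -/
lemma keyEq {F : Type*} [Field F] {P1 P2 Y : F × F} {a u : F}
    (d1 : 2 * Y.1 - P1.1 - P2.1 = -(P2.2 - P1.2) * u)
    (d2 : 2 * Y.2 - P1.2 - P2.2 = (P2.1 - P1.1) * u)
    (hY : qF Y P1 = a) :
    (u ^ 2 + 1) * qF P2 P1 = 4 * a := by
  simp only [qF] at hY ⊢
  linear_combination 4 * hY
    - (2 * Y.1 - P1.1 - P2.1 + 2 * (P2.1 - P1.1) - (P2.2 - P1.2) * u) * d1
    - (2 * Y.2 - P1.2 - P2.2 + 2 * (P2.2 - P1.2) + (P2.1 - P1.1) * u) * d2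

/-- Vieta-style: two common points of two circles with nonzero radius either agree
or sum to `P1 + P2`. -/
lemma lemV {F : Type*} [Field F] (h2 : (2 : F) ≠ 0) (P1 P2 Z Z' : F × F) (a : F)
    (ha : a ≠ 0) (hP : P1 ≠ P2)
    (e1 : qF Z P1 = a) (e2 : qF Z P2 = a)
    (e3 : qF Z' P1 = a) (e4 : qF Z' P2 = a) :
    Z = Z' ∨ Z + Z' = P1 + P2 := by
  obtain ⟨t, ht1, ht2⟩ := solveW hP Z e1 e2
  obtain ⟨s, hs1, hs2⟩ := solveW hP Z' e3 e4
  have hq1 := keyEq ht1 ht2 e1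
  have hq2 := keyEq hs1 hs2 e3
  have h4 : (4 : F) ≠ 0 := by
    have h42 : (4 : F) = 2 * 2 := by norm_num
    rw [h42]; exact mul_ne_zero h2 h2
  have hGne : qF P2 P1 ≠ 0 := by
    intro h0
    apply ha
    have h4a : 4 * a = 0 := by rw [← hq1, h0, mul_zero]
    exact (mul_eq_zero.mp h4a).resolve_left h4
  have hts : t ^ 2 = s ^ 2 := by
    have h' : (t ^ 2 + 1) * qF P2 P1 = (s ^ 2 + 1) * qF P2 P1 := hq1.trans hq2.symm
    have h'' := mul_right_cancel₀ hGne h'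
    linear_combination h''
  rcases mul_eq_zero.mp (show (t - s) * (t + s) = 0 by linear_combination hts) with hd | hd
  · left
    have c1 : 2 * Z.1 = 2 * Z'.1 := by
      linear_combination ht1 - hs1 - (P2.2 - P1.2) * hd
    have c2 : 2 * Z.2 = 2 * Z'.2 := by
      linear_combination ht2 - hs2 + (P2.1 - P1.1) * hd
    exact Prod.ext_iff.mpr ⟨mul_left_cancel₀ h2 c1, mul_left_cancel₀ h2 c2⟩
  · right
    have c1 : 2 * (Z.1 + Z'.1) = 2 * (P1.1 + P2.1) := by
      linear_combination ht1 + hs1 - (P2.2 - P1.2) * hd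
    have c2 : 2 * (Z.2 + Z'.2) = 2 * (P1.2 + P2.2) := by
      linear_combination ht2 + hs2 + (P2.1 - P1.1) * hd
    refine Prod.ext_iff.mpr ⟨?_, ?_⟩
    · simp only [Prod.fst_add]
      exact mul_left_cancel₀ h2 c1
    · simp only [Prod.snd_add]
      exact mul_left_cancel₀ h2 c2

section withF

variable {F : Type*} [Field F] [Algebra ℝ F]

/-- The distance-preservation hypothesis. -/
def Hyp (f : ℝ × ℝ → F × F) : Prop :=
  ∀ d : ℝ, 0 < d → (∃ q : ℚ, (q : ℝ) = d ^ 2) →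
    ∀ x y : ℝ × ℝ, Real.sqrt ((x.1 - y.1) ^ 2 + (x.2 - y.2) ^ 2) = d →
      ((f x).1 - (f y).1) ^ 2 + ((f x).2 - (f y).2) ^ 2 = algebraMap ℝ F (d ^ 2)

variable {f : ℝ × ℝ → F × F}

lemma key (hf : Hyp f) {x y : ℝ × ℝ} (hxy : x ≠ y)
    (hq : ∃ q : ℚ, (q : ℝ) = qd x y) :
    qF (f x) (f y) = algebraMap ℝ F (qd x y) := by
  have h0 : 0 < qd x y := qd_pos hxy
  have hrw : (x.1 - y.1) ^ 2 + (x.2 - y.2) ^ 2 = qd x y := rfl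
  have hsp : 0 < Real.sqrt (qd x y) := Real.sqrt_pos.mpr h0
  have hsq : Real.sqrt (qd x y) ^ 2 = qd x y := Real.sq_sqrt h0.le
  obtain ⟨q, hq⟩ := hq
  have hres := hf (Real.sqrt (qd x y)) hsp ⟨q, by rw [hsq, hq]⟩ x y (by rw [hrw])
  rw [hsq] at hres
  exact hres

lemma inj (hf : Hyp f) {u v : ℝ × ℝ} (huv : u ≠ v) : f u ≠ f v := by
  have hρ : 0 < qd u v := qd_pos huv
  set t : ℝ := (1 - 1 / qd u v) / 2 with ht
  obtain ⟨q, hq⟩ := exists_rat_gt (t ^ 2 * qd u v)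
  have harg : 0 ≤ ((q : ℝ) - t ^ 2 * qd u v) / qd u v :=
    div_nonneg (by linarith) hρ.le
  set σ : ℝ := Real.sqrt (((q : ℝ) - t ^ 2 * qd u v) / qd u v) with hσ
  have hσ2 : σ ^ 2 = ((q : ℝ) - t ^ 2 * qd u v) / qd u v := Real.sq_sqrt harg
  set z : ℝ × ℝ := (u.1 + t * (v.1 - u.1) + σ * (u.2 - v.2),
                    u.2 + t * (v.2 - u.2) + σ * (v.1 - u.1)) with hz
  have huz : qd u z = q := by
    have e : qd u z = (t ^ 2 + σ ^ 2) * qd u v := by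
      simp only [qd, hz]; ring
    rw [e, hσ2]
    field_simp
    ring
  have hvz : qd v z = q + 1 := by
    have e : qd v z = (t ^ 2 + σ ^ 2) * qd u v + (1 - 2 * t) * qd u v := by
      simp only [qd, hz]; ring
    have e2 : (1 - 2 * t) * qd u v = 1 := by
      rw [ht]; field_simp; ring
    have e3 : (t ^ 2 + σ ^ 2) * qd u v = q := by
      rw [hσ2]; field_simp; ring
    rw [e, e2, e3]
  have hq0 : (0 : ℝ) < q := by
    have := mul_nonneg (sq_nonneg t) hρ.le
    linarith
  have hnz1 : u ≠ z := ne_of_qd_pos (by rw [huz]; exact hq0)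
  have hnz2 : v ≠ z := ne_of_qd_pos (by rw [hvz]; linarith)
  intro hfe
  have E1 : qF (f u) (f z) = algebraMap ℝ F (qd u z) := key hf hnz1 ⟨q, huz.symm⟩
  have E2 : qF (f v) (f z) = algebraMap ℝ F (qd v z) :=
    key hf hnz2 ⟨q + 1, by push_cast; rw [hvz]⟩
  rw [hfe] at E1
  have hcomp : algebraMap ℝ F (qd u z) = algebraMap ℝ F (qd v z) := E1.symm.trans E2
  have heq : qd u z = qd v z := (algebraMap ℝ F).injective hcomp
  rw [huz, hvz] at heq
  linarith

/-- midpoint -/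
def mid (x y : ℝ × ℝ) : ℝ × ℝ := ((x.1 + y.1) / 2, (x.2 + y.2) / 2)

lemma mid_self (x : ℝ × ℝ) : mid x x = x := by
  refine Prod.ext_iff.mpr ⟨?_, ?_⟩ <;> · simp only [mid]; linarith

lemma mid_comm (x y : ℝ × ℝ) : mid x y = mid y x := by
  refine Prod.ext_iff.mpr ⟨?_, ?_⟩ <;> · simp only [mid]; ring

lemma qd_comm (x y : ℝ × ℝ) : qd x y = qd y x := by
  simp only [qd]; ring

lemma qd_mid_dist (x y : ℝ × ℝ) : qd (mid x y) x = qd x y / 4 := by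
  simp only [qd, mid]; ring

lemma qd_mid_right (x y c : ℝ × ℝ) : qd (mid x y) (mid x c) = qd y c / 4 := by
  simp only [qd, mid]; ring

lemma qd_mid_left (x c : ℝ × ℝ) : qd c (mid x c) = qd x c / 4 := by
  simp only [qd, mid]; ring

lemma charzero : Function.Injective (algebraMap ℝ F) → CharZero F :=
  fun h => charZero_of_injective_algebraMap h

lemma mid_rat (hf : Hyp f) {x y : ℝ × ℝ} (hq : ∃ q : ℚ, (q : ℝ) = qd x y) :
    f x + f y = f (mid x y) + f (mid x y) := by
  haveI : CharZero F := charzero (algebraMap ℝ F).injective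
  have h2 : (2 : F) ≠ 0 := two_ne_zero
  by_cases hxy : x = y
  · subst hxy; rw [mid_self]
  obtain ⟨q, hqe⟩ := hq
  have hρ : 0 < qd x y := qd_pos hxy
  have hmx : qd (mid x y) x = qd x y / 4 := qd_mid_dist x y
  have hmy : qd (mid x y) y = qd x y / 4 := by
    rw [mid_comm, qd_mid_dist, qd_comm y x]
  have hne1 : mid x y ≠ x := ne_of_qd_pos (by rw [hmx]; linarith)
  have hne2 : mid x y ≠ y := ne_of_qd_pos (by rw [hmy]; linarith)
  have E1 : qF (f (mid x y)) (f x) = algebraMap ℝ F (qd x y / 4) := by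
    have hk := key hf hne1 ⟨q / 4, by push_cast; rw [hmx, hqe]⟩
    rwa [hmx] at hk
  have E2 : qF (f (mid x y)) (f y) = algebraMap ℝ F (qd x y / 4) := by
    have hk := key hf hne2 ⟨q / 4, by push_cast; rw [hmy, hqe]⟩
    rwa [hmy] at hk
  have E0 : qF (f x) (f y) = algebraMap ℝ F (qd x y) := key hf hxy ⟨q, hqe⟩
  have hPne : f x ≠ f y := by
    intro h
    rw [h, qF_self] at E0
    have : qd x y = 0 := (algebraMap ℝ F).injective (by rw [← E0, map_zero])
    linarith
  obtain ⟨t, ht1, ht2⟩ := solveW hPne (f (mid x y)) E1 E2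
  have hq1 := keyEq ht1 ht2 E1
  have hG : qF (f y) (f x) = algebraMap ℝ F (qd x y) := (qF_comm _ _).trans E0
  have h4a : (4 : F) * algebraMap ℝ F (qd x y / 4) = algebraMap ℝ F (qd x y) := by
    have h44 : algebraMap ℝ F (4 : ℝ) = (4 : F) := map_ofNat _ 4
    rw [← h44, ← map_mul]
    congr 1
    ring
  have hGne2 : algebraMap ℝ F (qd x y) ≠ 0 := by
    intro h0
    have : qd x y = 0 := (algebraMap ℝ F).injective (by rw [h0, map_zero])
    linarith
  have ht0 : t = 0 := by
    have e : t ^ 2 * algebraMap ℝ F (qd x y) = 0 := by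
      linear_combination hq1 + h4a - (t ^ 2 + 1) * hG
    have e2 : t ^ 2 = 0 := (mul_eq_zero.mp e).resolve_right hGne2
    exact pow_eq_zero_iff (by norm_num) |>.mp e2
  rw [ht0] at ht1 ht2
  refine Prod.ext_iff.mpr ⟨?_, ?_⟩
  · simp only [Prod.fst_add]
    linear_combination -ht1
  · simp only [Prod.snd_add]
    linear_combination -ht2

/-- Auxiliary point on the perpendicular bisector of `x y` at rational squared
distance `α` from both. -/
def cpt (x y : ℝ × ℝ) (α : ℝ) : ℝ × ℝ :=
  ((x.1 + y.1) / 2 + Real.sqrt ((α - qd x y / 4) / qd x y) * (x.2 - y.2),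
   (x.2 + y.2) / 2 + Real.sqrt ((α - qd x y / 4) / qd x y) * (y.1 - x.1))

lemma qd_cpt_left {x y : ℝ × ℝ} (hxy : x ≠ y) {α : ℝ} (hα : qd x y / 4 ≤ α) :
    qd x (cpt x y α) = α := by
  have hρ := qd_pos hxy
  have harg : 0 ≤ (α - qd x y / 4) / qd x y := div_nonneg (by linarith) hρ.le
  have e : qd x (cpt x y α)
      = qd x y / 4 + Real.sqrt ((α - qd x y / 4) / qd x y) ^ 2 * qd x y := by
    simp only [qd, cpt]; ring
  rw [e, Real.sq_sqrt harg, div_mul_cancel₀ _ hρ.ne']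
  ring

lemma qd_cpt_right {x y : ℝ × ℝ} (hxy : x ≠ y) {α : ℝ} (hα : qd x y / 4 ≤ α) :
    qd y (cpt x y α) = α := by
  have hρ := qd_pos hxy
  have harg : 0 ≤ (α - qd x y / 4) / qd x y := div_nonneg (by linarith) hρ.le
  have e : qd y (cpt x y α)
      = qd x y / 4 + Real.sqrt ((α - qd x y / 4) / qd x y) ^ 2 * qd x y := by
    simp only [qd, cpt]; ring
  rw [e, Real.sq_sqrt harg, div_mul_cancel₀ _ hρ.ne']
  ring

lemma mid_all (hf : Hyp f) (x y : ℝ × ℝ) :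
    f x + f y = f (mid x y) + f (mid x y) := by
  haveI : CharZero F := charzero (algebraMap ℝ F).injective
  have h2 : (2 : F) ≠ 0 := two_ne_zero
  by_cases hxy : x = y
  · subst hxy; rw [mid_self]
  have hρ : 0 < qd x y := qd_pos hxy
  have claim : ∀ α : ℚ, qd x y / 4 < (α : ℝ) →
      (f x + f y = f (mid x y) + f (mid x y)) ∨ f (mid x y) = f (cpt x y (α : ℝ)) := by
    intro α hα
    have hα0 : 0 < (α : ℝ) := lt_of_le_of_lt (by positivity) hα
    have hxc : qd x (cpt x y (α : ℝ)) = (α : ℝ) := qd_cpt_left hxy hα.le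
    have hyc : qd y (cpt x y (α : ℝ)) = (α : ℝ) := qd_cpt_right hxy hα.le
    have hnxc : x ≠ cpt x y (α : ℝ) := ne_of_qd_pos (by rw [hxc]; exact hα0)
    have hnyc : y ≠ cpt x y (α : ℝ) := ne_of_qd_pos (by rw [hyc]; exact hα0)
    have A1 : f x + f (cpt x y (α : ℝ))
        = f (mid x (cpt x y (α : ℝ))) + f (mid x (cpt x y (α : ℝ))) :=
      mid_rat hf ⟨α, hxc.symm⟩
    have A2 : f y + f (cpt x y (α : ℝ))
        = f (mid y (cpt x y (α : ℝ))) + f (mid y (cpt x y (α : ℝ))) :=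
      mid_rat hf ⟨α, hyc.symm⟩
    have d1 : qd (mid x y) (mid x (cpt x y (α : ℝ))) = (α : ℝ) / 4 := by
      rw [qd_mid_right, hyc]
    have d2 : qd (mid x y) (mid y (cpt x y (α : ℝ))) = (α : ℝ) / 4 := by
      rw [mid_comm x y, qd_mid_right, hxc]
    have d3 : qd (cpt x y (α : ℝ)) (mid x (cpt x y (α : ℝ))) = (α : ℝ) / 4 := by
      rw [qd_mid_left, hxc]
    have d4 : qd (cpt x y (α : ℝ)) (mid y (cpt x y (α : ℝ))) = (α : ℝ) / 4 := by
      rw [qd_mid_left, hyc]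
    have E1 : qF (f (mid x y)) (f (mid x (cpt x y (α : ℝ))))
        = algebraMap ℝ F ((α : ℝ) / 4) := by
      have hk := key hf (ne_of_qd_pos (by rw [d1]; linarith))
        ⟨α / 4, by push_cast; rw [d1]⟩
      rwa [d1] at hk
    have E2 : qF (f (mid x y)) (f (mid y (cpt x y (α : ℝ))))
        = algebraMap ℝ F ((α : ℝ) / 4) := by
      have hk := key hf (ne_of_qd_pos (by rw [d2]; linarith))
        ⟨α / 4, by push_cast; rw [d2]⟩
      rwa [d2] at hk
    have E3 : qF (f (cpt x y (α : ℝ))) (f (mid x (cpt x y (α : ℝ))))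
        = algebraMap ℝ F ((α : ℝ) / 4) := by
      have hk := key hf (ne_of_qd_pos (by rw [d3]; linarith))
        ⟨α / 4, by push_cast; rw [d3]⟩
      rwa [d3] at hk
    have E4 : qF (f (cpt x y (α : ℝ))) (f (mid y (cpt x y (α : ℝ))))
        = algebraMap ℝ F ((α : ℝ) / 4) := by
      have hk := key hf (ne_of_qd_pos (by rw [d4]; linarith))
        ⟨α / 4, by push_cast; rw [d4]⟩
      rwa [d4] at hk
    have hm12 : f (mid x (cpt x y (α : ℝ))) ≠ f (mid y (cpt x y (α : ℝ))) := by
      intro hmm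
      apply inj hf hxy
      have hA2' : f y + f (cpt x y (α : ℝ))
          = f (mid x (cpt x y (α : ℝ))) + f (mid x (cpt x y (α : ℝ))) := by
        rw [hmm]; exact A2
      have := A1.trans hA2'.symm
      exact add_right_cancel this
    have ha : algebraMap ℝ F ((α : ℝ) / 4) ≠ 0 := by
      intro h0
      have : (α : ℝ) / 4 = 0 := (algebraMap ℝ F).injective (by rw [h0, map_zero])
      linarith
    rcases lemV h2 (f (mid x (cpt x y (α : ℝ)))) (f (mid y (cpt x y (α : ℝ))))
      (f (mid x y)) (f (cpt x y (α : ℝ))) (algebraMap ℝ F ((α : ℝ) / 4))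
      ha hm12 E1 E2 E3 E4 with hcase | hcase
    · right; exact hcase
    · left
      linear_combination A1 + A2 - 2 * hcase
  obtain ⟨α1, hα1⟩ := exists_rat_gt (qd x y / 4)
  have hα2 : qd x y / 4 < ((α1 + 1 : ℚ) : ℝ) := by push_cast; linarith
  rcases claim α1 hα1 with hdone | h1
  · exact hdone
  rcases claim (α1 + 1) hα2 with hdone | hh2
  · exact hdone
  exfalso
  have hcne : cpt x y ((α1 : ℚ) : ℝ) ≠ cpt x y ((α1 + 1 : ℚ) : ℝ) := by
    have hlt : ((α1 : ℝ) - qd x y / 4) / qd x y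
        < (((α1 + 1 : ℚ) : ℝ) - qd x y / 4) / qd x y := by
      apply div_lt_div_of_pos_right ?_ hρ
      push_cast; linarith
    have hslt : Real.sqrt (((α1 : ℝ) - qd x y / 4) / qd x y)
        < Real.sqrt ((((α1 + 1 : ℚ) : ℝ) - qd x y / 4) / qd x y) :=
      Real.sqrt_lt_sqrt (div_nonneg (by linarith) hρ.le) hlt
    have hsne := ne_of_lt hslt
    intro hce
    obtain ⟨e1, e2⟩ := Prod.ext_iff.mp hce
    simp only [cpt] at e1 e2
    have q1 : (Real.sqrt (((α1 : ℝ) - qd x y / 4) / qd x y)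
        - Real.sqrt ((((α1 + 1 : ℚ) : ℝ) - qd x y / 4) / qd x y)) * (x.2 - y.2) = 0 := by
      linear_combination e1
    have q2 : (Real.sqrt (((α1 : ℝ) - qd x y / 4) / qd x y)
        - Real.sqrt ((((α1 + 1 : ℚ) : ℝ) - qd x y / 4) / qd x y)) * (y.1 - x.1) = 0 := by
      linear_combination e2
    rcases mul_eq_zero.mp q1 with hb | hb
    · exact hsne (sub_eq_zero.mp hb)
    rcases mul_eq_zero.mp q2 with hb' | hb'
    · exact hsne (sub_eq_zero.mp hb')
    apply hxy
    refine Prod.ext_iff.mpr ⟨?_, ?_⟩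
    · have := sub_eq_zero.mp hb'
      linarith [this]
    · have := sub_eq_zero.mp hb
      linarith [this]
  exact inj hf hcne (h1.symm.trans hh2)

end withF

end

end BQaux


/-- `f : ℝ² → 𝔽²` preserves every distance `d > 0` with `d²` rational
(`|x-y| = d` implies `φ (f x) (f y) = d²`). -/
theorem stmt_10 {F : Type*} [Field F] [Algebra ℝ F]
    (f : ℝ × ℝ → F × F)
    (hf : ∀ d : ℝ, 0 < d → (∃ q : ℚ, (q : ℝ) = d ^ 2) →
      ∀ x y : ℝ × ℝ, Real.sqrt ((x.1 - y.1) ^ 2 + (x.2 - y.2) ^ 2) = d →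
        ((f x).1 - (f y).1) ^ 2 + ((f x).2 - (f y).2) ^ 2 = algebraMap ℝ F (d ^ 2))
    (A B C D : ℝ × ℝ) (r : ℚ) (h : D - C = (r : ℝ) • (B - A)) :
    f D - f C = (r : F) • (f B - f A) := by
  have hf' : BQaux.Hyp f := hf
  have hadd : ∀ u v : ℝ × ℝ, f (u + v) + f 0 = f u + f v := by
    intro u v
    have h1 := BQaux.mid_all hf' (u + v) 0
    have h2 := BQaux.mid_all hf' u v
    have hmm : BQaux.mid (u + v) 0 = BQaux.mid u v := by
      refine Prod.ext_iff.mpr ⟨?_, ?_⟩ <;>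
        simp [BQaux.mid, Prod.fst_add, Prod.snd_add]
    rw [hmm] at h1
    exact h1.trans h2.symm
  let G : (ℝ × ℝ) →+ (F × F) := AddMonoidHom.mk' (fun w => f w - f 0) (by
    intro a b
    have hab := hadd a b
    linear_combination hab)
  have hG : ∀ w, G w = f w - f 0 := fun _ => rfl
  have eDC : f D - f C = G D - G C := by rw [hG, hG]; abel
  have eBA : f B - f A = G B - G A := by rw [hG, hG]; abel
  rw [eDC, eBA, ← map_sub, ← map_sub, h]
  exact map_ratCast_smul G ℝ F r (B - A)
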